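/- Let G : F_{p^n} → F_{p^n} be a function whose restriction to C_d = {x^d : x ∈ F_{p^n}} is injective, where gcd(d, p^n-1) = e ≥ 2. Then the function F(x) = G(x^d) is zero-difference (e-1)-balanced: for every nonzero a ∈ F_{p^n}, the equation F(x+a) = F(x) has exactly e-1 solutions. -/

import Mathlib

open Finset

theorem stmt4 (p n d : ℕ) (hp : p.Prime) (hn : 0 < n) (hd : 0 < d)
    (K : Type) [Field K] [Fintype K] [DecidableEq K]
    (hcard : Fintype.card K = p ^ n)
    (e : ℕ) (he : e = Nat.gcd d (p ^ n - 1)) (he2 : 2 ≤ e)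
    (G : K → K)
    (hinj : Set.InjOn G {y : K | ∃ x : K, y = x ^ d}) :
    ∀ a : K, a ≠ 0 →
      (Finset.univ.filter (fun x : K => G ((x + a) ^ d) = G (x ^ d))).card = e - 1 := by
  intro a ha
  have he0 : 0 < e := by omega
  have hq1 : 0 < p ^ n - 1 := by
    have := Fintype.one_lt_card (α := K)
    omega
  have hedvd : e ∣ p ^ n - 1 := he ▸ Nat.gcd_dvd_right _ _
  have hed : e ∣ d := he ▸ Nat.gcd_dvd_left _ _
  -- reduce membership to (x+a)^d = x^d
  have hmem : ∀ x : K, G ((x + a) ^ d) = G (x ^ d) ↔ (x + a) ^ d = x ^ d := by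
    intro x
    constructor
    · intro h
      exact hinj ⟨x + a, rfl⟩ ⟨x, rfl⟩ h
    · intro h; rw [h]
  -- target set of roots of unity
  set T : Finset K := Finset.univ.filter (fun u : K => u ^ e = 1 ∧ u ≠ 1) with hT
  have hcardbij :
      (Finset.univ.filter (fun x : K => G ((x + a) ^ d) = G (x ^ d))).card = T.card := by
    apply Finset.card_bij (fun x _ => (x + a) / x)
    · intro x hx
      rw [Finset.mem_filter] at hx
      have hxd : (x + a) ^ d = x ^ d := (hmem x).1 hx.2
      have hx0 : x ≠ 0 := by
        rintro rfl
        rw [zero_add, zero_pow hd.ne'] at hxd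
        exact ha (pow_eq_zero_iff hd.ne' |>.1 hxd)
      have hxa0 : x + a ≠ 0 := by
        intro h
        rw [h, zero_pow hd.ne'] at hxd
        exact hx0 (pow_eq_zero_iff hd.ne' |>.1 hxd.symm)
      have hu0 : (x + a) / x ≠ 0 := div_ne_zero hxa0 hx0
      have hud : ((x + a) / x) ^ d = 1 := by
        rw [div_pow, hxd, div_self (pow_ne_zero _ hx0)]
      have huq : ((x + a) / x) ^ (p ^ n - 1) = 1 := by
        have := FiniteField.pow_card_sub_one_eq_one ((x + a) / x) hu0
        rwa [hcard] at this
      refine Finset.mem_filter.2 ⟨Finset.mem_univ _, ?_, ?_⟩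
      · rw [he]; exact pow_gcd_eq_one.2 ⟨hud, huq⟩
      · intro h
        rw [div_eq_one_iff_eq hx0] at h
        exact ha (by linear_combination h)
    · intro x hx y hy hxy
      rw [Finset.mem_filter] at hx hy
      have hx0 : x ≠ 0 := by
        rintro rfl
        have hxd : (0 + a) ^ d = (0 : K) ^ d := (hmem 0).1 hx.2
        rw [zero_add, zero_pow hd.ne'] at hxd
        exact ha (pow_eq_zero_iff hd.ne' |>.1 hxd)
      have hy0 : y ≠ 0 := by
        rintro rfl
        have hyd : (0 + a) ^ d = (0 : K) ^ d := (hmem 0).1 hy.2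
        rw [zero_add, zero_pow hd.ne'] at hyd
        exact ha (pow_eq_zero_iff hd.ne' |>.1 hyd)
      field_simp at hxy
      have h2 : a * y = a * x := by linear_combination hxy
      exact (mul_left_cancel₀ ha h2).symm
    · intro u hu
      rw [hT, Finset.mem_filter] at hu
      obtain ⟨-, hue, hu1⟩ := hu
      have hu10 : u - 1 ≠ 0 := sub_ne_zero.2 hu1
      refine ⟨a / (u - 1), ?_, ?_⟩
      · have hx0 : a / (u - 1) ≠ 0 := div_ne_zero ha hu10
        have hxa : a / (u - 1) + a = u * (a / (u - 1)) := by
          field_simp; ring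
        refine Finset.mem_filter.2 ⟨Finset.mem_univ _, (hmem _).2 ?_⟩
        rw [hxa, mul_pow]
        have hud : u ^ d = 1 := by
          obtain ⟨k, rfl⟩ := hed
          rw [pow_mul, hue, one_pow]
        rw [hud, one_mul]
      · have hxa : a / (u - 1) + a = u * (a / (u - 1)) := by
          field_simp; ring
        rw [hxa, mul_div_assoc, div_self (div_ne_zero ha hu10), mul_one]
  rw [hcardbij]
  -- now count T
  -- get a primitive e-th root of unity
  obtain ⟨g, hg⟩ := IsCyclic.exists_ofOrder_eq_natCard (α := Kˣ)
  have hcardu : Nat.card Kˣ = p ^ n - 1 := by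
    rw [Nat.card_eq_fintype_card, Fintype.card_units, hcard]
  rw [hcardu] at hg
  obtain ⟨k, hk⟩ := hedvd
  have hk0 : 0 < k := by
    rcases Nat.eq_zero_or_pos k with h | h
    · subst h; simp at hk; omega
    · exact h
  have horder : orderOf (g ^ k) = e := by
    rw [orderOf_pow, hg, hk]
    have : Nat.gcd (e * k) k = k := Nat.gcd_eq_right ⟨e, by ring⟩
    rw [this, Nat.mul_div_cancel _ hk0]
  have hprim : IsPrimitiveRoot ((g : Kˣ) ^ k : Kˣ) e := by
    rw [← horder]; exact IsPrimitiveRoot.orderOf _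
  have hprimK : IsPrimitiveRoot (((g ^ k : Kˣ) : K)) e := by
    have := hprim.map_of_injective (f := (Units.coeHom K)) (fun _ _ h => Units.ext h)
    exact this
  have hTeq : T = (Polynomial.nthRootsFinset e (1 : K)).erase 1 := by
    ext u
    simp only [hT, Finset.mem_filter, Finset.mem_univ, true_and, Finset.mem_erase,
      Polynomial.mem_nthRootsFinset he0 (1 : K)]
    tauto
  rw [hTeq, Finset.card_erase_of_mem, hprimK.card_nthRootsFinset]
  exact (Polynomial.mem_nthRootsFinset he0 (1 : K)).2 (one_pow e)
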